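/- Let f be an r×s complex matrix of rank s (full column rank), and let H : ℝ → (r×r complex matrices) be a differentiable family of positive-definite Hermitian matrices. Set J(t) = fᴴ H(t) f and let π(t) = f J(t)⁻¹ fᴴ H(t) be the H(t)-orthogonal projection onto the column space of f. Then π is differentiable and π'(t) = π(t) · (H(t)⁻¹H'(t)) · (I − π(t)). -/

import Mathlib

open Matrix
open scoped ComplexOrder

section aux

attribute [local instance] Matrix.linftyOpNormedAddCommGroup Matrix.linftyOpNormedSpace
  Matrix.linftyOpNormedRing Matrix.linftyOpNormedAlgebra

variable {m n p : ℕ} {t : ℝ}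

private lemma aux_mul {A : ℝ → Matrix (Fin m) (Fin n) ℂ} {A' : Matrix (Fin m) (Fin n) ℂ}
    {B : ℝ → Matrix (Fin n) (Fin p) ℂ} {B' : Matrix (Fin n) (Fin p) ℂ}
    (hA : ∀ i j, HasDerivAt (fun u => A u i j) (A' i j) t)
    (hB : ∀ i j, HasDerivAt (fun u => B u i j) (B' i j) t) :
    ∀ i j, HasDerivAt (fun u => (A u * B u) i j) ((A' * B t + A t * B') i j) t := by
  intro i j
  simp only [Matrix.mul_apply]
  have h := HasDerivAt.fun_sum (fun k (_ : k ∈ Finset.univ) => (hA i k).mul (hB k j))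
  convert h using 1
  · rfl
  · rfl
  rw [Matrix.add_apply, Matrix.mul_apply, Matrix.mul_apply, ← Finset.sum_add_distrib]

private lemma aux_const_mul (C : Matrix (Fin m) (Fin n) ℂ)
    {B : ℝ → Matrix (Fin n) (Fin p) ℂ} {B' : Matrix (Fin n) (Fin p) ℂ}
    (hB : ∀ i j, HasDerivAt (fun u => B u i j) (B' i j) t) :
    ∀ i j, HasDerivAt (fun u => (C * B u) i j) ((C * B') i j) t := by
  have h0 : ∀ (i : Fin m) (j : Fin n),
      HasDerivAt (fun _ : ℝ => C i j) ((0 : Matrix (Fin m) (Fin n) ℂ) i j) t := by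
    intro i j; simpa using hasDerivAt_const t (C i j)
  intro i j
  have := aux_mul (A := fun _ => C) h0 hB i j
  simpa using this

private lemma aux_mul_const (C : Matrix (Fin n) (Fin p) ℂ)
    {B : ℝ → Matrix (Fin m) (Fin n) ℂ} {B' : Matrix (Fin m) (Fin n) ℂ}
    (hB : ∀ i j, HasDerivAt (fun u => B u i j) (B' i j) t) :
    ∀ i j, HasDerivAt (fun u => (B u * C) i j) ((B' * C) i j) t := by
  have h0 : ∀ (i : Fin n) (j : Fin p),
      HasDerivAt (fun _ : ℝ => C i j) ((0 : Matrix (Fin n) (Fin p) ℂ) i j) t := by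
    intro i j; simpa using hasDerivAt_const t (C i j)
  intro i j
  have := aux_mul (B := fun _ => C) hB h0 i j
  simpa using this

private lemma aux_pack {M : ℝ → Matrix (Fin n) (Fin n) ℂ} {M' : Matrix (Fin n) (Fin n) ℂ}
    (h : ∀ i j, HasDerivAt (fun u => M u i j) (M' i j) t) :
    HasDerivAt M M' t := by
  have key : ∀ (u : ℝ), M u = ∑ i, ∑ j, M u i j • Matrix.single i j (1 : ℂ) := by
    intro u
    conv_lhs => rw [Matrix.matrix_eq_sum_single (M u)]
    refine Finset.sum_congr rfl fun i _ => Finset.sum_congr rfl fun j _ => ?_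
    rw [Matrix.smul_single, smul_eq_mul, mul_one]
  have key' : M' = ∑ i, ∑ j, M' i j • Matrix.single i j (1 : ℂ) := by
    conv_lhs => rw [Matrix.matrix_eq_sum_single M']
    refine Finset.sum_congr rfl fun i _ => Finset.sum_congr rfl fun j _ => ?_
    rw [Matrix.smul_single, smul_eq_mul, mul_one]
  have : HasDerivAt (fun u => ∑ i, ∑ j, M u i j • Matrix.single i j (1 : ℂ))
      (∑ i, ∑ j, M' i j • Matrix.single i j (1 : ℂ)) t := by
    refine HasDerivAt.fun_sum fun i _ => HasDerivAt.fun_sum fun j _ => ?_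
    exact (h i j).smul_const _
  rw [key']
  exact this.congr_of_eventuallyEq (Filter.Eventually.of_forall fun u => (key u))

private lemma aux_unpack {M : ℝ → Matrix (Fin n) (Fin n) ℂ} {M' : Matrix (Fin n) (Fin n) ℂ}
    (h : HasDerivAt M M' t) :
    ∀ i j, HasDerivAt (fun u => M u i j) (M' i j) t := by
  intro i j
  let l : Matrix (Fin n) (Fin n) ℂ →ₗ[ℝ] ℂ :=
    { toFun := fun A => A i j
      map_add' := fun _ _ => rfl
      map_smul' := fun _ _ => rfl }
  have := (LinearMap.toContinuousLinearMap l).hasFDerivAt.comp_hasDerivAt t h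
  exact this

private lemma aux_inv {J : ℝ → Matrix (Fin n) (Fin n) ℂ} {J' : Matrix (Fin n) (Fin n) ℂ}
    (hu : IsUnit (J t)) (h : HasDerivAt J J' t) :
    HasDerivAt (fun u => (J u)⁻¹) (-((J t)⁻¹ * J' * (J t)⁻¹)) t := by
  haveI : CompleteSpace (Matrix (Fin n) (Fin n) ℂ) := FiniteDimensional.complete ℝ _
  obtain ⟨u, hu'⟩ := hu
  have h1 : HasFDerivAt Ring.inverse
      (-(ContinuousLinearMap.mulLeftRight ℝ (Matrix (Fin n) (Fin n) ℂ) ↑u⁻¹ ↑u⁻¹)) (J t) := by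
    rw [← hu']; exact hasFDerivAt_ringInverse u
  have h2 := h1.comp_hasDerivAt t h
  have h3 : (fun u => Ring.inverse (J u)) = fun u => (J u)⁻¹ := by
    funext v; rw [Matrix.nonsing_inv_eq_ringInverse]
  have h4 : (↑u⁻¹ : Matrix (Fin n) (Fin n) ℂ) = (J t)⁻¹ := by
    rw [← hu', Matrix.nonsing_inv_eq_ringInverse, Ring.inverse_unit]
  rw [Function.comp_def] at h2
  rw [h3, h4] at h2
  exact h2

end aux

/-- Let `f` be an `r × s` complex matrix of rank `s` (full column
rank), and let `H : ℝ → Matrix (Fin r) (Fin r) ℂ` be a differentiable family of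
positive-definite Hermitian matrices with (entrywise) derivative `H'`.  Set
`J t = fᴴ H(t) f` and let `π t = f (J t)⁻¹ fᴴ H t` be the `H t`-orthogonal
projection onto the column space of `f`.  Then `π` is differentiable and
`π'(t) = π t · ((H t)⁻¹ H' t) · (I − π t)` (entrywise). -/
theorem statement12 (r s : ℕ) (f : Matrix (Fin r) (Fin s) ℂ) (hf : f.rank = s)
    (H H' : ℝ → Matrix (Fin r) (Fin r) ℂ)
    (hH : ∀ t, (H t).PosDef)
    (hH' : ∀ (i j : Fin r) (t : ℝ), HasDerivAt (fun u => H u i j) (H' t i j) t)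
    (J : ℝ → Matrix (Fin s) (Fin s) ℂ)
    (hJ : ∀ t, J t = fᴴ * H t * f)
    (π : ℝ → Matrix (Fin r) (Fin r) ℂ)
    (hπ : ∀ t, π t = f * (J t)⁻¹ * fᴴ * H t) :
    ∀ (i j : Fin r) (t : ℝ), HasDerivAt (fun u => π u i j)
      ((π t * ((H t)⁻¹ * H' t) * (1 - π t)) i j) t := by
  have hπe : π = fun u => f * (J u)⁻¹ * fᴴ * H u := funext hπ
  subst hπe
  have hJe : J = fun u => fᴴ * H u * f := funext hJ
  subst hJe
  -- f has injective mulVec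
  have hinj : Function.Injective f.mulVecLin := by
    rw [← LinearMap.ker_eq_bot]
    have h1 := f.mulVecLin.finrank_range_add_finrank_ker
    rw [show Module.finrank ℂ (LinearMap.range f.mulVecLin) = s from hf] at h1
    simp only [Module.finrank_pi, Fintype.card_fin] at h1
    have : Module.finrank ℂ (LinearMap.ker f.mulVecLin) = 0 := by omega
    exact Submodule.finrank_eq_zero.mp this
  -- J is positive definite, hence a unit
  have hJpos : ∀ t, (fᴴ * H t * f).PosDef := by
    intro t
    refine Matrix.PosDef.of_dotProduct_mulVec_pos (Matrix.isHermitian_conjTranspose_mul_mul f (hH t).1) fun x hx => ?_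
    have hfx : f *ᵥ x ≠ 0 := by
      intro h0
      exact hx (hinj (by simpa using h0))
    have := (hH t).dotProduct_mulVec_pos hfx
    have hrw : star x ⬝ᵥ ((fᴴ * H t * f) *ᵥ x)
        = star (f *ᵥ x) ⬝ᵥ (H t *ᵥ (f *ᵥ x)) := by
      rw [← Matrix.mulVec_mulVec, ← Matrix.mulVec_mulVec, Matrix.dotProduct_mulVec,
        ← Matrix.star_mulVec]
    rw [hrw]
    exact this
  intro i j t
  -- entrywise derivative of J
  have hJent : ∀ i j, HasDerivAt (fun u => (fᴴ * H u * f) i j) ((fᴴ * H' t * f) i j) t :=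
    aux_mul_const f (aux_const_mul fᴴ (fun i j => hH' i j t))
  -- derivative of J⁻¹
  have hKmat := aux_inv (J := fun u => fᴴ * H u * f) (hJpos t).isUnit (aux_pack hJent)
  have hKent := aux_unpack hKmat
  -- entrywise derivative of π
  have hKent0 := aux_unpack hKmat
  have hKent : ∀ i j, HasDerivAt (fun u => (fᴴ * H u * f)⁻¹ i j)
      ((-((fᴴ * H t * f)⁻¹ * (fᴴ * H' t * f) * (fᴴ * H t * f)⁻¹)) i j) t :=
    fun i j => hKent0 i j
  have hπent := aux_mul (aux_mul_const fᴴ (aux_const_mul f hKent)) (fun i j => hH' i j t)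
  have hdet : IsUnit (H t).det := (Matrix.isUnit_iff_isUnit_det _).mp (hH t).isUnit
  have hinvH : ∀ Z : Matrix (Fin r) (Fin r) ℂ, H t * ((H t)⁻¹ * Z) = Z := by
    intro Z
    rw [← Matrix.mul_assoc, Matrix.mul_nonsing_inv _ hdet, Matrix.one_mul]
  have key : (f * (fᴴ * H t * f)⁻¹ * fᴴ * H t) * ((H t)⁻¹ * H' t)
        * (1 - f * (fᴴ * H t * f)⁻¹ * fᴴ * H t)
      = (f * (-((fᴴ * H t * f)⁻¹ * (fᴴ * H' t * f) * (fᴴ * H t * f)⁻¹)) * fᴴ) * H t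
        + (f * (fᴴ * H t * f)⁻¹ * fᴴ) * H' t := by
    simp only [Matrix.mul_sub, Matrix.sub_mul, Matrix.mul_one, Matrix.neg_mul,
      Matrix.mul_neg, Matrix.mul_assoc, hinvH]
    abel
  have goal := hπent i j
  convert goal using 1
  simp only [hπ, hJ, key]
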